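/- Fix k ≥ 1 and let p_1 < p_2 < ... denote the primes in increasing order. Then the averages (1/n)·∑_{j=1}^{n} μ̃_k(j) converge, as n → ∞, to -∏_{i=1}^{k} (1 - 1/p_i)². -/

import Mathlib

open ArithmeticFunction Finset Filter
open scoped ArithmeticFunction.zeta

/-- `nthPrime k` is the `k`-th prime in the increasing enumeration of the primes,
indexed from 1 (so `nthPrime 1 = 2`, `nthPrime 2 = 3`, ...). -/
noncomputable def nthPrime (k : ℕ) : ℕ := Nat.nth Nat.Prime (k - 1)

/-- The `p_k`-smooth part of `n`: the product of all prime powers `p ^ (ν_p n)` in the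
factorization of `n` with `p ≤ p_k`. -/
noncomputable def smoothPart (k n : ℕ) : ℕ :=
  n.factorization.prod fun p e => if p ≤ nthPrime k then p ^ e else 1

/-- The `k`-th Möbius prime-function: writing `n = s · m` with `s` the `p_k`-smooth part of `n`
and `m` coprime to all primes `≤ p_k`, it equals `μ s` if `m = 1` and `-μ s` if `m > 1`. -/
noncomputable def mobiusP (k n : ℕ) : ℤ :=
  if n / smoothPart k n = 1 then moebius (smoothPart k n) else -moebius (smoothPart k n)

namespace MPaux

/-- The set of primes `≤ p_k`. -/
noncomputable def Q (k : ℕ) : Finset ℕ := Nat.primesBelow (nthPrime k + 1)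

/-- The primorial `P = ∏_{p ≤ p_k} p`. -/
noncomputable def P (k : ℕ) : ℕ := ∏ p ∈ Q k, p

lemma mem_Q {k p : ℕ} : p ∈ Q k ↔ p.Prime ∧ p ≤ nthPrime k := by
  simp [Q, Nat.mem_primesBelow, Nat.lt_succ_iff, and_comm]

lemma prime_of_mem_Q {k p : ℕ} (h : p ∈ Q k) : p.Prime := (mem_Q.1 h).1

lemma P_ne_zero (k : ℕ) : P k ≠ 0 :=
  Finset.prod_ne_zero_iff.2 fun p hp => (prime_of_mem_Q hp).ne_zero

lemma P_pos (k : ℕ) : 0 < P k := Nat.pos_of_ne_zero (P_ne_zero k)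

lemma primeFactors_P (k : ℕ) : (P k).primeFactors = Q k :=
  Nat.primeFactors_prod fun _ hp => prime_of_mem_Q hp

lemma squarefree_prod_primes {s : Finset ℕ} : (∀ p ∈ s, p.Prime) → Squarefree (∏ p ∈ s, p) := by
  induction s using Finset.induction with
  | empty => intro _; simp
  | @insert p s hps ih =>
    intro hs
    have hp : p.Prime := hs p (mem_insert_self p s)
    have hs' : ∀ q ∈ s, q.Prime := fun q hq => hs q (mem_insert_of_mem hq)
    have hcop : Nat.Coprime p (∏ q ∈ s, q) := by
      refine Nat.Coprime.prod_right fun q hq => ?_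
      exact (Nat.coprime_primes hp (hs' q hq)).2 (by rintro rfl; exact hps hq)
    rw [Finset.prod_insert hps, Nat.squarefree_mul hcop]
    exact ⟨hp.squarefree, ih hs'⟩

lemma squarefree_P (k : ℕ) : Squarefree (P k) :=
  squarefree_prod_primes fun _ hp => prime_of_mem_Q hp

lemma prime_dvd_P_iff {k p : ℕ} (hp : p.Prime) : p ∣ P k ↔ p ≤ nthPrime k := by
  have := primeFactors_P k
  constructor
  · intro h
    have : p ∈ (P k).primeFactors := Nat.mem_primeFactors.2 ⟨hp, h, P_ne_zero k⟩
    exact (mem_Q.1 (primeFactors_P k ▸ this)).2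
  · intro h
    exact Finset.dvd_prod_of_mem _ (mem_Q.2 ⟨hp, h⟩)

lemma smoothPart_dvd {k n : ℕ} (hn : n ≠ 0) : smoothPart k n ∣ n := by
  conv_rhs => rw [← Nat.factorization_prod_pow_eq_self hn]
  rw [smoothPart, Finsupp.prod, Finsupp.prod]
  refine Finset.prod_dvd_prod_of_dvd _ _ fun p _ => ?_
  split
  · exact dvd_rfl
  · exact one_dvd _

lemma smoothPart_pos (k n : ℕ) : 0 < smoothPart k n := by
  rw [smoothPart, Finsupp.prod]
  refine Finset.prod_pos fun p hp => ?_
  have hp' : p.Prime := Nat.prime_of_mem_primeFactors ((Nat.support_factorization n) ▸ hp)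
  split
  · exact pow_pos hp'.pos _
  · exact one_pos

lemma smoothPart_one (k : ℕ) : smoothPart k 1 = 1 := by simp [smoothPart]

lemma smoothPart_mul {k m n : ℕ} (hm : m ≠ 0) (hn : n ≠ 0) :
    smoothPart k (m * n) = smoothPart k m * smoothPart k n := by
  unfold smoothPart
  rw [Nat.factorization_mul hm hn]
  exact Finsupp.prod_add_index' (fun p => by split <;> simp)
    (fun p a b => by split <;> simp [pow_add])

lemma smoothPart_prime_pow {k p : ℕ} (hp : p.Prime) (e : ℕ) :
    smoothPart k (p ^ e) = if p ≤ nthPrime k then p ^ e else 1 := by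
  rw [smoothPart, hp.factorization_pow, Finsupp.prod_single_index (by split <;> simp)]

lemma prime_le_of_dvd_smoothPart {k p n : ℕ} (hp : p.Prime) (h : p ∣ smoothPart k n) :
    p ≤ nthPrime k := by
  rw [smoothPart, Finsupp.prod] at h
  obtain ⟨q, hq, hpq⟩ := (Nat.Prime.prime hp).dvd_finset_prod_iff _ |>.1 h
  have hq' : q.Prime := Nat.prime_of_mem_primeFactors ((Nat.support_factorization n) ▸ hq)
  by_cases h' : q ≤ nthPrime k
  · rw [if_pos h'] at hpq
    rwa [(Nat.prime_dvd_prime_iff_eq hp hq').1 (hp.dvd_of_dvd_pow hpq)]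
  · rw [if_neg h'] at hpq
    exact absurd (Nat.le_of_dvd one_pos hpq) (by have := hp.two_le; omega)

lemma mobiusP_eq {k j : ℕ} (hj : j ≠ 0) :
    mobiusP k j = 2 * (if smoothPart k j = j then moebius j else 0) - moebius (smoothPart k j) := by
  have hd := smoothPart_dvd (k := k) hj
  have hpos := smoothPart_pos k j
  by_cases h : smoothPart k j = j
  · rw [mobiusP, if_pos (by rw [h, Nat.div_self (h ▸ hpos)]), if_pos h, h]
    ring
  · have hne : j / smoothPart k j ≠ 1 := by
      intro he
      exact h (by conv_rhs => rw [← Nat.mul_div_cancel' hd, he, mul_one])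
    rw [mobiusP, if_neg hne, if_neg h]
    ring

/-- Möbius function restricted to divisors of `P k`. -/
noncomputable def muP (k : ℕ) : ArithmeticFunction ℤ :=
  ⟨fun a => if a ∣ P k then moebius a else 0, by simp⟩

/-- Indicator of being nonzero and coprime to `P k`. -/
noncomputable def tF (k : ℕ) : ArithmeticFunction ℤ :=
  ⟨fun m => if m ≠ 0 ∧ Nat.Coprime m (P k) then 1 else 0, by simp⟩

/-- The function `n ↦ μ (smoothPart k n)`. -/
noncomputable def gF (k : ℕ) : ArithmeticFunction ℤ :=
  ⟨fun n => if n = 0 then 0 else moebius (smoothPart k n), by simp⟩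

lemma muP_apply {k a : ℕ} : muP k a = if a ∣ P k then moebius a else 0 := rfl

lemma tF_apply {k m : ℕ} : tF k m = if m ≠ 0 ∧ Nat.Coprime m (P k) then 1 else 0 := rfl

lemma gF_apply {k n : ℕ} (hn : n ≠ 0) : gF k n = moebius (smoothPart k n) := if_neg hn

lemma muP_mult (k : ℕ) : (muP k).IsMultiplicative := by
  refine ⟨by simp [muP_apply], @fun m n h => ?_⟩
  by_cases hmn : m * n ∣ P k
  · have hm : m ∣ P k := (dvd_mul_right m n).trans hmn
    have hn : n ∣ P k := (dvd_mul_left n m).trans hmn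
    simp only [muP_apply, if_pos hmn, if_pos hm, if_pos hn]
    exact isMultiplicative_moebius.map_mul_of_coprime h
  · have : ¬ m ∣ P k ∨ ¬ n ∣ P k := by
      by_contra hc
      push_neg at hc
      exact hmn (Nat.Coprime.mul_dvd_of_dvd_of_dvd h hc.1 hc.2)
    rcases this with h' | h' <;> simp [muP_apply, hmn, h']

lemma tF_mult (k : ℕ) : (tF k).IsMultiplicative := by
  refine ⟨by simp [tF_apply, Nat.coprime_one_left], @fun m n h => ?_⟩
  simp only [tF_apply, ne_eq, mul_eq_zero, Nat.coprime_mul_iff_left]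
  split_ifs with h1 h2 h3 h4 h5 h6 h7 <;> first | rfl | (exfalso; tauto) | norm_num <;> tauto

lemma gF_mult (k : ℕ) : (gF k).IsMultiplicative := by
  refine ⟨by simp [gF_apply, smoothPart_one], @fun m n h => ?_⟩
  rcases eq_or_ne m 0 with rfl | hm
  · simp [gF]
  rcases eq_or_ne n 0 with rfl | hn
  · simp [gF]
  rw [gF_apply (mul_ne_zero hm hn), gF_apply hm, gF_apply hn, smoothPart_mul hm hn]
  exact isMultiplicative_moebius.map_mul_of_coprime
    ((h.coprime_dvd_left (smoothPart_dvd hm)).coprime_dvd_right (smoothPart_dvd hn))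

lemma mul_apply_prime_pow {f g : ArithmeticFunction ℤ} {p : ℕ} (hp : p.Prime) (e : ℕ) :
    (f * g) (p ^ e) = ∑ i ∈ range (e + 1), f (p ^ i) * g (p ^ (e - i)) := by
  rw [ArithmeticFunction.mul_apply,
    Nat.sum_divisorsAntidiagonal (f := fun a b => f a * g b),
    Nat.divisors_prime_pow hp, Finset.sum_map]
  refine sum_congr rfl fun i hi => ?_
  simp only [Function.Embedding.coeFn_mk]
  rw [Nat.pow_div (Nat.le_of_lt_succ (mem_range.1 hi)) hp.pos]

lemma muP_prime_pow_le {k p : ℕ} (hp : p.Prime) (hple : p ≤ nthPrime k) (e : ℕ) :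
    muP k (p ^ e) = moebius (p ^ e) := by
  rw [muP_apply]
  match e with
  | 0 => simp
  | 1 => rw [if_pos (by simpa using (prime_dvd_P_iff hp).2 hple)]
  | (n+2) =>
    simp [moebius_apply_prime_pow hp (show n+2 ≠ 0 by omega), show ¬(n+2=1) by omega]

lemma muP_prime_pow_gt {k p : ℕ} (hp : p.Prime) (hpgt : ¬ p ≤ nthPrime k) {e : ℕ} (he : e ≠ 0) :
    muP k (p ^ e) = 0 := by
  rw [muP_apply, if_neg]
  intro hdvd
  exact hpgt ((prime_dvd_P_iff hp).1 ((dvd_pow_self p he).trans hdvd))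

lemma sum_range_small (F : ℕ → ℤ) (hF : ∀ i, 2 ≤ i → F i = 0) {e : ℕ} (he : 1 ≤ e) :
    ∑ i ∈ range (e + 1), F i = F 0 + F 1 := by
  induction e with
  | zero => omega
  | succ n ih =>
    rcases Nat.eq_zero_or_pos n with rfl | hn
    · simp [Finset.sum_range_succ]
    · rw [Finset.sum_range_succ, ih hn, hF (n+1) (by omega), add_zero]

lemma tF_eq (k : ℕ) : tF k = muP k * (ζ : ArithmeticFunction ℤ) := by
  rw [ArithmeticFunction.IsMultiplicative.eq_iff_eq_on_prime_powers _ (tF_mult k) _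
    ((muP_mult k).mul isMultiplicative_zeta.natCast)]
  intro p e hp
  rw [mul_apply_prime_pow hp]
  have hz : ∀ i : ℕ, ((ζ : ArithmeticFunction ℤ) (p ^ (e - i))) = 1 := fun i => by
    rw [natCoe_apply, zeta_apply_ne (pow_ne_zero _ hp.ne_zero), Nat.cast_one]
  simp_rw [hz, mul_one]
  by_cases hple : p ≤ nthPrime k
  · have hdvd : p ∣ P k := (prime_dvd_P_iff hp).2 hple
    rcases Nat.eq_zero_or_pos e with rfl | he
    · simp [tF_apply, Nat.coprime_one_left, muP_apply, one_dvd]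
    · rw [sum_range_small _ (fun i hi => by
        rw [muP_prime_pow_le hp hple i,
          moebius_apply_prime_pow hp (by omega), if_neg (by omega)]) he]
      rw [muP_prime_pow_le hp hple 0, muP_prime_pow_le hp hple 1, pow_zero, pow_one,
        moebius_apply_one, moebius_apply_prime hp, tF_apply, if_neg]
      · ring
      · rintro ⟨-, hc⟩
        exact (hp.coprime_iff_not_dvd.1
          (Nat.Coprime.coprime_dvd_left (dvd_pow_self p he.ne') hc)) hdvd
  · rw [Finset.sum_eq_single_of_mem 0 (mem_range.2 (by omega))
      (fun i _ hne => muP_prime_pow_gt hp hple hne)]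
    rw [pow_zero, muP_apply, if_pos (one_dvd _), moebius_apply_one, tF_apply,
      if_pos ⟨pow_ne_zero _ hp.ne_zero, Nat.Coprime.pow_left _
        (hp.coprime_iff_not_dvd.2 fun hd => hple ((prime_dvd_P_iff hp).1 hd))⟩]

lemma gF_eq (k : ℕ) : gF k = muP k * tF k := by
  rw [ArithmeticFunction.IsMultiplicative.eq_iff_eq_on_prime_powers _ (gF_mult k) _
    ((muP_mult k).mul (tF_mult k))]
  intro p e hp
  rw [mul_apply_prime_pow hp, gF_apply (pow_ne_zero _ hp.ne_zero), smoothPart_prime_pow hp]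
  by_cases hple : p ≤ nthPrime k
  · rw [if_pos hple]
    have hdvd : p ∣ P k := (prime_dvd_P_iff hp).2 hple
    have htF : ∀ i : ℕ, tF k (p ^ i) = if i = 0 then 1 else 0 := by
      intro i
      rcases Nat.eq_zero_or_pos i with rfl | hi
      · simp [tF_apply, Nat.coprime_one_left]
      · rw [tF_apply, if_neg, if_neg (by omega)]
        rintro ⟨-, hc⟩
        exact (hp.coprime_iff_not_dvd.1
          (Nat.Coprime.coprime_dvd_left (dvd_pow_self p hi.ne') hc)) hdvd
    rw [Finset.sum_eq_single_of_mem e (self_mem_range_succ e)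
      (fun i hi hne => by
        rw [htF, if_neg (by have := mem_range.1 hi; omega), mul_zero])]
    rw [htF, Nat.sub_self, if_pos rfl, mul_one, muP_prime_pow_le hp hple]
  · rw [if_neg hple]
    rw [Finset.sum_eq_single_of_mem 0 (mem_range.2 (by omega))
      (fun i _ hne => by rw [muP_prime_pow_gt hp hple hne, zero_mul])]
    rw [pow_zero, Nat.sub_zero, muP_apply, if_pos (one_dvd _), moebius_apply_one, tF_apply,
      if_pos ⟨pow_ne_zero _ hp.ne_zero, Nat.Coprime.pow_left _
        (hp.coprime_iff_not_dvd.2 fun hd => hple ((prime_dvd_P_iff hp).1 hd))⟩, one_mul]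

lemma swap_lemma (u v : ℕ → ℤ) (N : ℕ) :
    ∑ j ∈ Ioc 0 N, ∑ x ∈ j.divisorsAntidiagonal, u x.1 * v x.2
      = ∑ a ∈ Ioc 0 N, u a * ∑ m ∈ Ioc 0 (N / a), v m := by
  simp_rw [Finset.mul_sum]
  rw [Finset.sum_sigma' (Ioc 0 N) (fun j => j.divisorsAntidiagonal) (fun j x => u x.1 * v x.2),
    Finset.sum_sigma' (Ioc 0 N) (fun a => Ioc 0 (N / a)) (fun a m => u a * v m)]
  refine Finset.sum_nbij' (fun x => (⟨x.2.1, x.2.2⟩ : Σ _ : ℕ, ℕ))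
    (fun y => (⟨y.1 * y.2, (y.1, y.2)⟩ : Σ _ : ℕ, ℕ × ℕ)) ?_ ?_ ?_ ?_ ?_
  · rintro ⟨j, a, m⟩ hx
    simp only [Finset.mem_sigma, Finset.mem_Ioc, Nat.mem_divisorsAntidiagonal] at hx ⊢
    obtain ⟨⟨hj0, hjN⟩, ham, hne⟩ := hx
    have ha0 : 0 < a := by
      rcases Nat.eq_zero_or_pos a with rfl | h
      · simp at ham; omega
      · exact h
    have hm0 : 0 < m := by
      rcases Nat.eq_zero_or_pos m with rfl | h
      · simp at ham; omega
      · exact h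
    refine ⟨⟨ha0, le_trans (Nat.le_mul_of_pos_right a hm0) (ham ▸ hjN)⟩, hm0, ?_⟩
    rw [Nat.le_div_iff_mul_le ha0, mul_comm]
    exact ham ▸ hjN
  · rintro ⟨a, m⟩ hy
    simp only [Finset.mem_sigma, Finset.mem_Ioc, Nat.mem_divisorsAntidiagonal] at hy ⊢
    obtain ⟨⟨ha0, haN⟩, hm0, hmN⟩ := hy
    have : m * a ≤ N := (Nat.le_div_iff_mul_le ha0).1 hmN
    exact ⟨⟨by positivity, by rw [mul_comm] at this; omega⟩, trivial, by positivity⟩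
  · rintro ⟨j, a, m⟩ hx
    simp only [Finset.mem_sigma, Nat.mem_divisorsAntidiagonal] at hx
    obtain ⟨-, ham, -⟩ := hx
    simp [ham]
  · rintro ⟨a, m⟩ _
    rfl
  · rintro ⟨j, a, m⟩ _
    rfl

lemma T_eq (k M : ℕ) :
    ∑ m ∈ Ioc 0 M, tF k m = ∑ b ∈ Ioc 0 M, muP k b * ((M / b : ℕ) : ℤ) := by
  calc ∑ m ∈ Ioc 0 M, tF k m
      = ∑ m ∈ Ioc 0 M, ∑ x ∈ m.divisorsAntidiagonal,
          muP k x.1 * (fun r => ((ζ : ArithmeticFunction ℤ) r)) x.2 := by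
        refine sum_congr rfl fun m hm => ?_
        rw [tF_eq k, ArithmeticFunction.mul_apply]
    _ = ∑ b ∈ Ioc 0 M, muP k b * ∑ m ∈ Ioc 0 (M / b), (ζ : ArithmeticFunction ℤ) m :=
        swap_lemma _ _ M
    _ = ∑ b ∈ Ioc 0 M, muP k b * ((M / b : ℕ) : ℤ) := by
        refine sum_congr rfl fun b hb => ?_
        congr 1
        calc ∑ m ∈ Ioc 0 (M / b), (ζ : ArithmeticFunction ℤ) m
            = ∑ m ∈ Ioc 0 (M / b), (1 : ℤ) := by
              refine sum_congr rfl fun m hm => ?_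
              rw [natCoe_apply, zeta_apply_ne (by have := (mem_Ioc.1 hm).1; omega), Nat.cast_one]
          _ = ((M / b : ℕ) : ℤ) := by simp [Nat.card_Ioc]

lemma G_eq (k N : ℕ) : ∑ j ∈ Ioc 0 N, gF k j
    = ∑ a ∈ Ioc 0 N, muP k a * ∑ b ∈ Ioc 0 (N / a), muP k b * ((N / (a * b) : ℕ) : ℤ) := by
  calc ∑ j ∈ Ioc 0 N, gF k j
      = ∑ j ∈ Ioc 0 N, ∑ x ∈ j.divisorsAntidiagonal, muP k x.1 * tF k x.2 := by
        refine sum_congr rfl fun j hj => ?_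
        rw [gF_eq k, ArithmeticFunction.mul_apply]
    _ = ∑ a ∈ Ioc 0 N, muP k a * ∑ m ∈ Ioc 0 (N / a), tF k m := swap_lemma _ _ N
    _ = _ := by
        refine sum_congr rfl fun a ha => ?_
        rw [T_eq]
        congr 1
        refine sum_congr rfl fun b hb => ?_
        rw [Nat.div_div_eq_div_mul]

lemma G_restrict (k N : ℕ) (hN : P k * P k ≤ N) :
    ∑ j ∈ Ioc 0 N, gF k j
      = ∑ a ∈ (P k).divisors, ∑ b ∈ (P k).divisors,
          moebius a * moebius b * ((N / (a * b) : ℕ) : ℤ) := by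
  rw [G_eq]
  have hPP : P k ≤ P k * P k := Nat.le_mul_of_pos_right _ (P_pos k)
  have hPN : P k ≤ N := le_trans hPP hN
  have hsub1 : (P k).divisors ⊆ Ioc 0 N := by
    intro a ha
    have := Nat.mem_divisors.1 ha
    exact mem_Ioc.2 ⟨Nat.pos_of_mem_divisors ha, le_trans (Nat.le_of_dvd (P_pos k) this.1) hPN⟩
  rw [← Finset.sum_subset hsub1 (fun a ha hna => ?van1)]
  · refine sum_congr rfl fun a ha => ?_
    have hadv : a ∣ P k := (Nat.mem_divisors.1 ha).1
    have ha0 : 0 < a := Nat.pos_of_mem_divisors ha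
    have hsub2 : (P k).divisors ⊆ Ioc 0 (N / a) := by
      intro b hb
      refine mem_Ioc.2 ⟨Nat.pos_of_mem_divisors hb, ?_⟩
      rw [Nat.le_div_iff_mul_le ha0]
      calc b * a ≤ P k * P k :=
            Nat.mul_le_mul (Nat.le_of_dvd (P_pos k) (Nat.mem_divisors.1 hb).1)
              (Nat.le_of_dvd (P_pos k) hadv)
        _ ≤ N := hN
    rw [← Finset.sum_subset hsub2 (fun b hb hnb => ?van2)]
    · rw [muP_apply, if_pos hadv, Finset.mul_sum]
      refine sum_congr rfl fun b hb => ?_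
      rw [muP_apply, if_pos (Nat.mem_divisors.1 hb).1]
      ring
    case van2 =>
      have hb0 : b ≠ 0 := by have := (mem_Ioc.1 hb).1; omega
      rw [muP_apply, if_neg (fun hd => hnb (Nat.mem_divisors.2 ⟨hd, P_ne_zero k⟩)), zero_mul]
  case van1 =>
    have ha0 : a ≠ 0 := by have := (mem_Ioc.1 ha).1; omega
    rw [muP_apply, if_neg (fun hd => hna (Nat.mem_divisors.2 ⟨hd, P_ne_zero k⟩)), zero_mul]

/-- The bounded part of the sum. -/
noncomputable def hfun (k j : ℕ) : ℤ := if smoothPart k j = j then moebius j else 0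

lemma hfun_dvd {k j : ℕ} (hne : hfun k j ≠ 0) : j ∣ P k := by
  rw [hfun] at hne
  split at hne
  case isFalse => exact absurd rfl hne
  case isTrue hsm =>
    have hsf : Squarefree j := moebius_ne_zero_iff_squarefree.1 hne
    have hsubQ : j.primeFactors ⊆ Q k := by
      intro p hp
      have hp' : p.Prime := Nat.prime_of_mem_primeFactors hp
      refine mem_Q.2 ⟨hp', ?_⟩
      refine prime_le_of_dvd_smoothPart (k := k) (n := j) hp' ?_
      rw [hsm]
      exact Nat.dvd_of_mem_primeFactors hp
    calc j = ∏ p ∈ j.primeFactors, p := (Nat.prod_primeFactors_of_squarefree hsf).symm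
      _ ∣ P k := Finset.prod_dvd_prod_of_subset _ _ _ hsubQ

lemma H_eq (k N : ℕ) (hN : P k ≤ N) :
    ∑ j ∈ Ioc 0 N, hfun k j = ∑ j ∈ Ioc 0 (P k), hfun k j := by
  refine (Finset.sum_subset (Finset.Ioc_subset_Ioc le_rfl hN) fun j hj hnj => ?_).symm
  by_contra hne
  have hdvd := hfun_dvd hne
  have h1 : 0 < j := (mem_Ioc.1 hj).1
  exact hnj (mem_Ioc.2 ⟨h1, Nat.le_of_dvd (P_pos k) hdvd⟩)

lemma main_identity (k N : ℕ) (hN : P k * P k ≤ N) :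
    ∑ j ∈ Icc 1 N, mobiusP k j
      = 2 * (∑ j ∈ Ioc 0 (P k), hfun k j)
        - ∑ a ∈ (P k).divisors, ∑ b ∈ (P k).divisors,
            moebius a * moebius b * ((N / (a * b) : ℕ) : ℤ) := by
  have hPN : P k ≤ N := le_trans (Nat.le_mul_of_pos_right _ (P_pos k)) hN
  have h1 : Finset.Icc 1 N = Finset.Ioc 0 N := rfl
  rw [h1]
  calc ∑ j ∈ Ioc 0 N, mobiusP k j
      = ∑ j ∈ Ioc 0 N, (2 * hfun k j - gF k j) := by
        refine sum_congr rfl fun j hj => ?_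
        have hj0 : j ≠ 0 := by have := (mem_Ioc.1 hj).1; omega
        rw [mobiusP_eq hj0, hfun, gF_apply hj0]
    _ = 2 * (∑ j ∈ Ioc 0 N, hfun k j) - ∑ j ∈ Ioc 0 N, gF k j := by
        rw [Finset.sum_sub_distrib, Finset.mul_sum]
    _ = _ := by rw [H_eq k N hPN, G_restrict k N hN]

lemma sum_moebius_div (k : ℕ) :
    ∑ a ∈ (P k).divisors, (moebius a : ℝ) / a = ∏ p ∈ Q k, (1 - 1/(p:ℝ)) := by
  have h1 : ∑ a ∈ (P k).divisors, (moebius a : ℝ) / a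
      = ∑ S ∈ (Q k).powerset, ∏ p ∈ S, (-(1:ℝ)/p) := by
    refine Finset.sum_nbij' (fun a => a.primeFactors) (fun S => ∏ p ∈ S, p)
      ?_ ?_ ?_ ?_ ?_
    · intro a ha
      rw [Finset.mem_powerset, ← primeFactors_P k]
      exact Nat.primeFactors_mono (Nat.mem_divisors.1 ha).1 (P_ne_zero k)
    · intro S hS
      rw [Finset.mem_powerset] at hS
      exact Nat.mem_divisors.2 ⟨Finset.prod_dvd_prod_of_subset _ _ _ hS, P_ne_zero k⟩
    · intro a ha
      exact Nat.prod_primeFactors_of_squarefree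
        (Squarefree.squarefree_of_dvd (Nat.mem_divisors.1 ha).1 (squarefree_P k))
    · intro S hS
      rw [Finset.mem_powerset] at hS
      exact Nat.primeFactors_prod fun p hp => prime_of_mem_Q (hS hp)
    · intro a ha
      have hsf : Squarefree a :=
        Squarefree.squarefree_of_dvd (Nat.mem_divisors.1 ha).1 (squarefree_P k)
      have hprimes : ∀ p ∈ a.primeFactors, p.Prime := fun p hp =>
        Nat.prime_of_mem_primeFactors hp
      conv_lhs => rw [← Nat.prod_primeFactors_of_squarefree hsf]
      rw [isMultiplicative_moebius.map_prod _ a.primeFactors (fun p hp q hq hne =>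
        (Nat.coprime_primes (hprimes p hp) (hprimes q hq)).2 hne)]
      push_cast
      rw [← Finset.prod_div_distrib]
      refine Finset.prod_congr rfl fun p hp => ?_
      rw [moebius_apply_prime (hprimes p hp)]
      push_cast
      ring
  rw [h1]
  have h2 : ∏ p ∈ Q k, (1 - 1/(p:ℝ)) = ∏ p ∈ Q k, (-(1:ℝ)/p + 1) := by
    refine Finset.prod_congr rfl fun p hp => by ring
  rw [h2, Finset.prod_add (fun p : ℕ => -(1:ℝ)/p) (fun _ => (1:ℝ)) (Q k)]
  refine Finset.sum_congr rfl fun S hS => ?_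
  rw [Finset.prod_const_one, mul_one]

lemma Q_eq_image {k : ℕ} (hk : 1 ≤ k) : Q k = (Icc 1 k).image nthPrime := by
  ext p
  simp only [mem_Q, Finset.mem_image, Finset.mem_Icc]
  constructor
  · rintro ⟨hp, hle⟩
    have hcount : Nat.count Nat.Prime p ≤ k - 1 :=
      (Nat.count_le_iff_le_nth Nat.infinite_setOf_prime).2 hle
    refine ⟨Nat.count Nat.Prime p + 1, ⟨by omega, by omega⟩, ?_⟩
    show Nat.nth Nat.Prime (Nat.count Nat.Prime p + 1 - 1) = p
    rw [Nat.add_sub_cancel]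
    exact Nat.nth_count hp
  · rintro ⟨i, ⟨h1, h2⟩, rfl⟩
    refine ⟨Nat.prime_nth_prime _, ?_⟩
    show Nat.nth Nat.Prime (i - 1) ≤ Nat.nth Nat.Prime (k - 1)
    exact (Nat.nth_le_nth Nat.infinite_setOf_prime).2 (by omega)

lemma tendsto_cast_div {d : ℕ} (hd : 0 < d) :
    Tendsto (fun N : ℕ => ((N / d : ℕ) : ℝ) / (N : ℝ)) atTop (nhds (1 / (d : ℝ))) := by
  have h := (tendsto_nat_floor_mul_div_atTop (R := ℝ) (a := 1/(d:ℝ)) (by positivity)).comp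
    tendsto_natCast_atTop_atTop
  refine h.congr fun N => ?_
  simp only [Function.comp_apply]
  rw [one_div, inv_mul_eq_div, Nat.floor_div_natCast, Nat.floor_natCast]

lemma final_value {k : ℕ} (hk : 1 ≤ k) :
    ∑ a ∈ (P k).divisors, ∑ b ∈ (P k).divisors,
        (moebius a : ℝ) * (moebius b : ℝ) * (1 / ((a : ℝ) * (b : ℝ)))
      = ∏ i ∈ Icc 1 k, (1 - 1 / (nthPrime i : ℝ)) ^ 2 := by
  have hE := sum_moebius_div k
  have hinj : ∀ i ∈ Icc 1 k, ∀ j ∈ Icc 1 k, nthPrime i = nthPrime j → i = j := by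
    intro i hi j hj hij
    have h2 : Nat.nth Nat.Prime (i - 1) = Nat.nth Nat.Prime (j - 1) := hij
    have := Nat.nth_injective Nat.infinite_setOf_prime h2
    simp only [Finset.mem_Icc] at hi hj
    omega
  have hQ : ∏ p ∈ Q k, (1 - 1/(p:ℝ)) = ∏ i ∈ Icc 1 k, (1 - 1/(nthPrime i : ℝ)) := by
    rw [Q_eq_image hk, Finset.prod_image hinj]
  calc ∑ a ∈ (P k).divisors, ∑ b ∈ (P k).divisors,
        (moebius a : ℝ) * (moebius b : ℝ) * (1 / ((a : ℝ) * (b : ℝ)))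
      = (∑ a ∈ (P k).divisors, (moebius a : ℝ)/a)
          * (∑ b ∈ (P k).divisors, (moebius b : ℝ)/b) := by
        rw [Finset.sum_mul_sum]
        refine Finset.sum_congr rfl fun a ha => Finset.sum_congr rfl fun b hb => ?_
        rw [div_mul_div_comm, mul_one_div]
    _ = (∏ i ∈ Icc 1 k, (1 - 1/(nthPrime i : ℝ)))^2 := by rw [hE, hQ]; ring
    _ = ∏ i ∈ Icc 1 k, (1 - 1 / (nthPrime i : ℝ)) ^ 2 := (Finset.prod_pow _ _ _).symm

end MPaux

/-- The averages `(1/n)·∑_{j=1}^{n} μ̃_k(j)` converge to `-∏_{i=1}^{k} (1 - 1/p_i)²`. -/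
theorem mobiusP_average_tendsto (k : ℕ) (hk : 1 ≤ k) :
    Tendsto (fun n : ℕ => (∑ j ∈ Finset.Icc 1 n, (mobiusP k j : ℝ)) / n) atTop
      (nhds (-∏ i ∈ Finset.Icc 1 k, (1 - 1 / (nthPrime i : ℝ)) ^ 2)) := by
  classical
  set D := (MPaux.P k).divisors with hD
  set c : ℤ := ∑ j ∈ Ioc 0 (MPaux.P k), MPaux.hfun k j with hc
  have hlim : Tendsto (fun N : ℕ =>
      (2 * (c:ℝ))/(N:ℝ) - ∑ a ∈ D, ∑ b ∈ D,
        (moebius a : ℝ) * (moebius b : ℝ) * (((N / (a*b) : ℕ) : ℝ)/(N:ℝ))) atTop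
      (nhds (0 - ∑ a ∈ D, ∑ b ∈ D,
        (moebius a : ℝ) * (moebius b : ℝ) * (1/((a:ℝ)*(b:ℝ))))) := by
    refine Tendsto.sub (tendsto_const_div_atTop_nhds_zero_nat _) ?_
    refine tendsto_finset_sum _ fun a ha => ?_
    refine tendsto_finset_sum _ fun b hb => ?_
    have hab : 0 < a * b :=
      Nat.mul_pos (Nat.pos_of_mem_divisors ha) (Nat.pos_of_mem_divisors hb)
    have h1 := (MPaux.tendsto_cast_div hab).const_mul ((moebius a : ℝ) * (moebius b : ℝ))
    have h2 : (moebius a : ℝ) * (moebius b : ℝ) * (1/((a:ℝ)*(b:ℝ)))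
        = (moebius a : ℝ) * (moebius b : ℝ) * (1/((a*b : ℕ):ℝ)) := by push_cast; ring
    rw [h2]
    exact h1.congr fun N => by ring
  have hev : ∀ᶠ N in atTop,
      (∑ j ∈ Finset.Icc 1 N, (mobiusP k j : ℝ)) / (N:ℝ) =
      (2 * (c:ℝ))/(N:ℝ) - ∑ a ∈ D, ∑ b ∈ D,
        (moebius a : ℝ) * (moebius b : ℝ) * (((N / (a*b) : ℕ) : ℝ)/(N:ℝ)) := by
    refine eventually_atTop.2 ⟨MPaux.P k * MPaux.P k, fun N hN => ?_⟩
    have hid := MPaux.main_identity k N hN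
    have hcast : (∑ j ∈ Finset.Icc 1 N, (mobiusP k j : ℝ))
        = ((∑ j ∈ Finset.Icc 1 N, mobiusP k j : ℤ) : ℝ) := (Int.cast_sum _ _).symm
    rw [hcast, hid, Int.cast_sub, Int.cast_mul, sub_div]
    congr 1
    rw [Int.cast_sum, Finset.sum_div]
    refine Finset.sum_congr rfl fun a ha => ?_
    rw [Int.cast_sum, Finset.sum_div]
    refine Finset.sum_congr rfl fun b hb => ?_
    rw [Int.cast_mul, Int.cast_mul, Int.cast_natCast]
    ring
  have htend := hlim.congr' (Filter.EventuallyEq.symm hev)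
  have h2 : (0:ℝ) - ∑ a ∈ D, ∑ b ∈ D,
      (moebius a : ℝ) * (moebius b : ℝ) * (1/((a:ℝ)*(b:ℝ)))
      = -∏ i ∈ Finset.Icc 1 k, (1 - 1 / (nthPrime i : ℝ)) ^ 2 := by
    rw [zero_sub, MPaux.final_value hk]
  rwa [h2] at htend
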